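/- Let μ be an infinite cardinal and n < ω. Then the 2-identity (^n2, e*_n) belongs to ID_2(μ^{+n}, μ); that is, for every coloring c : [μ^{+n}]^2 → μ there is an injective map η ↦ α_η from ^n2 into μ^{+n} such that whenever {η1,η2} and {ν1,ν2} are 2-element subsets of ^n2 with η1 ∩ η2 = ν1 ∩ ν2, then c({α_{η1}, α_{η2}}) = c({α_{ν1}, α_{ν2}}). -/
import Mathlib


open Cardinal

/-- The `n`-th cardinal successor `μ⁺ⁿ`. -/
noncomputable def succIter (c : Cardinal.{0}) (n : ℕ) : Cardinal.{0} :=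
  Order.succ^[n] c

/-- For sequences `η₁, η₂, ν₁, ν₂ ∈ ^n2` with `η₁ ≠ η₂` and `ν₁ ≠ ν₂`:
`η₁ ∩ η₂ = ν₁ ∩ ν₂`, i.e. the longest common initial segments coincide. -/
def SeqMeetEq {n : ℕ} (η1 η2 ν1 ν2 : Fin n → Fin 2) : Prop :=
  ∃ k : ℕ, (∀ i : Fin n, (i : ℕ) < k → η1 i = η2 i ∧ ν1 i = ν2 i ∧ η1 i = ν1 i) ∧
    (∀ i : Fin n, (i : ℕ) = k → η1 i ≠ η2 i ∧ ν1 i ≠ ν2 i)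

lemma succIter_succ (c : Cardinal.{0}) (n : ℕ) :
    succIter c (n + 1) = Order.succ (succIter c n) :=
  Function.iterate_succ_apply' _ _ _

lemma le_succIter (c : Cardinal.{0}) (n : ℕ) : c ≤ succIter c n := by
  induction n with
  | zero => exact le_rfl
  | succ n ih => rw [succIter_succ]; exact ih.trans (Order.le_succ _)

lemma aleph0_le_succIter {c : Cardinal.{0}} (h : ℵ₀ ≤ c) (n : ℕ) : ℵ₀ ≤ succIter c n :=
  h.trans (le_succIter c n)

/-- Regular pigeonhole: a map from a set of regular size `κ` into fewer than `κ` colors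
has a fiber of size at least `κ`. -/
lemma exists_big_fiber {κ : Cardinal.{0}} (hκ : κ.IsRegular) {X C : Type}
    (hX : κ ≤ #X) (hC : #C < κ) (f : X → C) :
    ∃ e : C, κ ≤ #{x : X // f x = e} := by
  by_contra h
  push_neg at h
  have h1 : #X = Cardinal.sum (fun e : C => #{x : X // f x = e}) := by
    rw [← Cardinal.mk_sigma]
    exact Cardinal.mk_congr (Equiv.sigmaFiberEquiv f).symm
  have h2 : Cardinal.sum (fun e : C => #{x : X // f x = e}) < κ :=
    Cardinal.sum_lt_of_isRegular hκ hC h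
  rw [h1] at hX
  exact absurd hX h2.not_ge

lemma fin2_ne (a b : Fin 2) (h : a ≠ b) : (a = 0 ∧ b = 1) ∨ (a = 1 ∧ b = 0) := by
  fin_cases a <;> fin_cases b <;> simp_all

lemma nonempty_of_big {κ : Cardinal.{0}} (hκ : ℵ₀ ≤ κ) {X : Type} (hX : κ ≤ #X) :
    Nonempty X :=
  Cardinal.mk_ne_zero_iff.1 ((aleph0_pos.trans_le (hκ.trans hX)).ne')

/-- The main induction. -/
theorem key (mu : Cardinal.{0}) (hmu : ℵ₀ ≤ mu) :
    ∀ n : ℕ, ∀ (X : Type), succIter mu n ≤ #X → ∀ (c : Sym2 X → Quotient.out mu),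
    ∃ α : (Fin n → Fin 2) → X, Function.Injective α ∧
      ∀ η1 η2 ν1 ν2 : Fin n → Fin 2, η1 ≠ η2 → ν1 ≠ ν2 →
        SeqMeetEq η1 η2 ν1 ν2 → c s(α η1, α η2) = c s(α ν1, α ν2) := by
  intro n
  induction n with
  | zero =>
    intro X hX c
    have hX' : mu ≤ #X := by simpa [succIter] using hX
    obtain ⟨x⟩ := nonempty_of_big hmu hX'
    refine ⟨fun _ => x, ?_, ?_⟩
    · intro a b _
      funext i; exact i.elim0
    · intro η1 η2 ν1 ν2 hne1 _ _
      exact absurd (funext fun i => i.elim0) hne1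
  | succ n ih =>
    match n, ih with
    | 0, _ =>
      intro X hX c
      have h2 : (2 : Cardinal) ≤ #X := by
        have h2a : (2 : Cardinal) ≤ ℵ₀ := by exact_mod_cast (Cardinal.nat_lt_aleph0 2).le
        exact h2a.trans ((aleph0_le_succIter hmu 1).trans hX)
      obtain ⟨x, y, hxy⟩ := Cardinal.two_le_iff.1 h2
      refine ⟨fun η => if η 0 = 0 then x else y, ?_, ?_⟩
      · intro a b h
        dsimp only at h
        funext i
        have hi : i = 0 := Fin.ext (by omega)
        subst hi
        by_cases ha : a 0 = 0 <;> by_cases hb : b 0 = 0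
        · exact ha.trans hb.symm
        · rw [if_pos ha, if_neg hb] at h; exact absurd h hxy
        · rw [if_neg ha, if_pos hb] at h; exact absurd h.symm hxy
        · rcases fin2_ne _ _ ha with ⟨h1, _⟩ | ⟨h1, _⟩
          · exact absurd h1 ha
          · rcases fin2_ne _ _ hb with ⟨h1', _⟩ | ⟨h1', _⟩
            · exact absurd h1' hb
            · exact h1.trans h1'.symm
      · intro η1 η2 ν1 ν2 hne1 hne2 _
        have key2 : ∀ ρ σ : Fin 1 → Fin 2, ρ ≠ σ →
            s((if ρ 0 = 0 then x else y), (if σ 0 = 0 then x else y)) = s(x, y) := by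
          intro ρ σ hne
          have h0 : ρ 0 ≠ σ 0 := by
            intro h; apply hne; funext i
            have hi : i = 0 := Fin.ext (by omega)
            rw [hi]; exact h
          rcases fin2_ne _ _ h0 with ⟨h1, h2'⟩ | ⟨h1, h2'⟩
          · rw [if_pos h1, if_neg (by rw [h2']; exact one_ne_zero)]
          · rw [if_neg (by rw [h1]; exact one_ne_zero), if_pos h2', Sym2.eq_swap]
        dsimp only
        rw [key2 _ _ hne1, key2 _ _ hne2]
    | (m + 1), ih =>
      intro X hX c
      set lam : Cardinal.{0} := succIter mu (m + 1) with hlamdef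
      set kap : Cardinal.{0} := Order.succ lam with hkapdef
      have hlamreg : lam.IsRegular := by
        rw [hlamdef, succIter_succ]
        exact Cardinal.isRegular_succ (aleph0_le_succIter hmu m)
      have hlam0 : ℵ₀ ≤ lam := hlamreg.aleph0_le
      have hkap : succIter mu (m + 1 + 1) = kap := succIter_succ mu (m + 1)
      have hkapreg : kap.IsRegular := Cardinal.isRegular_succ hlam0
      have hlamlt : lam < kap := Order.lt_succ _
      have hmulam : mu ≤ lam := le_succIter mu (m + 1)
      have hmultlam : mu < lam := by
        rw [hlamdef, succIter_succ]
        exact (le_succIter mu m).trans_lt (Order.lt_succ _)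
      have hmuout : #(Quotient.out mu) = mu := Cardinal.mk_out mu
      rw [hkap] at hX
      -- embed a disjoint union of a copy of `lam` and a copy of `kap` into `X`
      have hj : #(Quotient.out lam ⊕ Quotient.out kap) ≤ #X := by
        rw [Cardinal.mk_sum, Cardinal.lift_id, Cardinal.lift_id,
          Cardinal.mk_out, Cardinal.mk_out, Cardinal.add_eq_max hlam0,
          max_eq_right hlamlt.le]
        exact hX
      obtain ⟨j⟩ := (Cardinal.le_def _ _).1 hj
      set bot : Quotient.out lam → X := fun a => j (Sum.inl a) with hbotdef
      set top : Quotient.out kap → X := fun b => j (Sum.inr b) with htopdef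
      have botinj : Function.Injective bot := fun a b h => Sum.inl_injective (j.injective h)
      have topinj : Function.Injective top := fun a b h => Sum.inr_injective (j.injective h)
      have bot_ne_top : ∀ a b, bot a ≠ top b := by
        intro a b h
        exact absurd (j.injective h) (by simp)
      -- Step 1: for each point `b` on top, find a realization on the bottom all of whose
      -- points get a single color `e` when paired with `b`.
      have H : ∀ b : Quotient.out kap,
          ∃ (t : (Fin (m + 1) → Fin 2) → Quotient.out lam) (e : Quotient.out mu),
            Function.Injective t ∧
            (∀ x, c s(bot (t x), top b) = e) ∧
            (∀ η1 η2 ν1 ν2 : Fin (m + 1) → Fin 2, η1 ≠ η2 → ν1 ≠ ν2 →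
              SeqMeetEq η1 η2 ν1 ν2 →
              c s(bot (t η1), bot (t η2)) = c s(bot (t ν1), bot (t ν2))) := by
        intro b
        obtain ⟨e, he⟩ := exists_big_fiber hlamreg (le_of_eq (Cardinal.mk_out lam).symm)
          (by rw [hmuout]; exact hmultlam) (fun a => c s(bot a, top b))
        obtain ⟨α', hinj, hprop⟩ := ih _ he (fun p => c (p.map (fun a => bot a.1)))
        refine ⟨fun x => (α' x).1, e, Subtype.val_injective.comp hinj,
          fun x => (α' x).2, ?_⟩
        intro η1 η2 ν1 ν2 h1 h2 h3
        have hp := hprop η1 η2 ν1 ν2 h1 h2 h3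
        simpa only [Sym2.map_pair_eq] using hp
      choose t e tinj tcross tprop using H
      -- Step 2: pigeonhole the map `b ↦ (t b, e b)` over the top copy.
      have hcod : #(((Fin (m + 1) → Fin 2) → Quotient.out lam) × Quotient.out mu)
          < kap := by
        rw [Cardinal.mk_prod, Cardinal.lift_id, Cardinal.lift_id, hmuout]
        have h1 : #((Fin (m + 1) → Fin 2) → Quotient.out lam) ≤ lam := by
          rw [← Cardinal.power_def, Cardinal.mk_out]
          exact Cardinal.pow_le hlam0 (Cardinal.lt_aleph0_of_finite _)
        calc #((Fin (m + 1) → Fin 2) → Quotient.out lam) * mu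
            ≤ lam * lam := mul_le_mul' h1 hmulam
          _ = lam := Cardinal.mul_eq_self hlam0
          _ < kap := hlamlt
      obtain ⟨v, hv⟩ := exists_big_fiber hkapreg
        (le_of_eq (Cardinal.mk_out kap).symm) hcod (fun b => (t b, e b))
      set B := {b : Quotient.out kap // (t b, e b) = v} with hBdef
      obtain ⟨b0⟩ : Nonempty B := nonempty_of_big hkapreg.aleph0_le hv
      set t0 : (Fin (m + 1) → Fin 2) → Quotient.out lam := t b0.1 with ht0def
      set e0 : Quotient.out mu := e b0.1 with he0def
      have hconst : ∀ b : B, t b.1 = t0 ∧ e b.1 = e0 := by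
        intro b
        have h1 : (t b.1, e b.1) = (t b0.1, e b0.1) := b.2.trans b0.2.symm
        exact ⟨congrArg Prod.fst h1, congrArg Prod.snd h1⟩
      -- Step 3: realization on the top copy, inside `B`.
      have hlamB : lam ≤ #B := hlamlt.le.trans hv
      obtain ⟨β, hβinj, hβprop⟩ := ih _ hlamB (fun p => c (p.map (fun b : B => top b.1)))
      -- cross colors are constantly `e0`
      have crossEq : ∀ (x y : Fin (m + 1) → Fin 2),
          c s(bot (t0 x), top (β y).1) = e0 := by
        intro x y
        have h1 := tcross (β y).1 x
        rw [(hconst (β y)).1] at h1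
        rw [h1, (hconst (β y)).2]
      -- the tail map
      set tl : (Fin (m + 2) → Fin 2) → (Fin (m + 1) → Fin 2) :=
        fun η i => η i.succ with htldef
      -- the final realization
      refine ⟨fun η => if η 0 = 0 then bot (t0 (tl η)) else top (β (tl η)).1, ?_, ?_⟩
      · -- injectivity
        intro η η' h
        dsimp only at h
        have heads : η 0 = η' 0 ∧ tl η = tl η' := by
          by_cases h0 : η 0 = 0 <;> by_cases h0' : η' 0 = 0
          · rw [if_pos h0, if_pos h0'] at h
            exact ⟨h0.trans h0'.symm, tinj b0.1 (botinj h)⟩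
          · rw [if_pos h0, if_neg h0'] at h
            exact absurd h (bot_ne_top _ _)
          · rw [if_neg h0, if_pos h0'] at h
            exact absurd h.symm (bot_ne_top _ _)
          · rw [if_neg h0, if_neg h0'] at h
            refine ⟨?_, hβinj (Subtype.val_injective (topinj h))⟩
            rcases fin2_ne _ _ h0 with ⟨h1, _⟩ | ⟨h1, _⟩
            · exact absurd h1 h0
            · rcases fin2_ne _ _ h0' with ⟨h1', _⟩ | ⟨h1', _⟩
              · exact absurd h1' h0'
              · exact h1.trans h1'.symm
        funext i
        refine Fin.cases heads.1 (fun i' => congrFun heads.2 i') i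
      · -- the coloring property
        intro η1 η2 ν1 ν2 hne1 hne2 hmeet
        dsimp only
        obtain ⟨k, hk1, hk2⟩ := hmeet
        have hkN : k < m + 2 := by
          by_contra hge
          apply hne1
          funext i
          exact (hk1 i (lt_of_lt_of_le i.2 (not_lt.1 hge))).1
        match k, hkN, hk1, hk2 with
        | 0, _, hk1, hk2 =>
          -- cross pairs: both colors are `e0`
          have crosscolor : ∀ ρ σ : Fin (m + 2) → Fin 2, ρ 0 ≠ σ 0 →
              c s((if ρ 0 = 0 then bot (t0 (tl ρ)) else top (β (tl ρ)).1),
                  (if σ 0 = 0 then bot (t0 (tl σ)) else top (β (tl σ)).1)) = e0 := by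
            intro ρ σ h0
            rcases fin2_ne _ _ h0 with ⟨h1, h2'⟩ | ⟨h1, h2'⟩
            · rw [if_pos h1, if_neg (by rw [h2']; exact one_ne_zero)]
              exact crossEq (tl ρ) (tl σ)
            · rw [if_neg (by rw [h1]; exact one_ne_zero), if_pos h2', Sym2.eq_swap]
              exact crossEq (tl σ) (tl ρ)
          have hd := hk2 (0 : Fin (m + 2)) rfl
          rw [crosscolor _ _ hd.1, crosscolor _ _ hd.2]
        | (k' + 1), hkN, hk1, hk2 =>
          have hkn : k' < m + 1 := by omega
          have hhead := hk1 (0 : Fin (m + 2)) (by simp)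
          -- heads: all four agree
          have hη2 : η2 0 = η1 0 := hhead.1.symm
          have hν1 : ν1 0 = η1 0 := hhead.2.2.symm
          have hν2 : ν2 0 = η1 0 := hhead.2.1.symm.trans hhead.2.2.symm
          -- the tails
          have htailmeet : SeqMeetEq (tl η1) (tl η2) (tl ν1) (tl ν2) := by
            refine ⟨k', ?_, ?_⟩
            · intro i hi
              exact hk1 i.succ (by simp only [Fin.val_succ]; omega)
            · intro i hi
              exact hk2 i.succ (by simp only [Fin.val_succ]; omega)
          have hd := hk2 (⟨k', hkn⟩ : Fin (m + 1)).succ (by simp [Fin.val_succ])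
          have htne1 : tl η1 ≠ tl η2 := fun hh => hd.1 (congrFun hh ⟨k', hkn⟩)
          have htne2 : tl ν1 ≠ tl ν2 := fun hh => hd.2 (congrFun hh ⟨k', hkn⟩)
          by_cases hs : η1 0 = 0
          · -- all four on the bottom
            rw [if_pos hs, if_pos (hη2.trans hs), if_pos (hν1.trans hs),
              if_pos (hν2.trans hs)]
            have hp := tprop b0.1 (tl η1) (tl η2) (tl ν1) (tl ν2) htne1 htne2 htailmeet
            rw [ht0def]
            exact hp
          · -- all four on the top
            have hs2 : ¬ η2 0 = 0 := fun hq => hs (hη2.symm.trans hq)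
            have hs3 : ¬ ν1 0 = 0 := fun hq => hs (hν1.symm.trans hq)
            have hs4 : ¬ ν2 0 = 0 := fun hq => hs (hν2.symm.trans hq)
            rw [if_neg hs, if_neg hs2, if_neg hs3, if_neg hs4]
            have hp := hβprop (tl η1) (tl η2) (tl ν1) (tl ν2) htne1 htne2 htailmeet
            simpa only [Sym2.map_pair_eq] using hp

/-- The inductive step in the proof of Claim t.3: the 2-identity `(^n2, e*_n)` belongs
to `ID₂(μ^{+n}, μ)`; i.e. for every pair-coloring `c : [μ^{+n}]² → μ` there are
pairwise distinct `α_η < μ^{+n}` (for `η ∈ ^n2`) such that pairs with equal meets get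
equal colors. -/
theorem star_identity_mem_ID2 (mu : Cardinal.{0}) (hmu : ℵ₀ ≤ mu) (n : ℕ)
    (c : Sym2 (Quotient.out (succIter mu n)) → Quotient.out mu) :
    ∃ α : (Fin n → Fin 2) → Quotient.out (succIter mu n),
      Function.Injective α ∧
        ∀ η1 η2 ν1 ν2 : Fin n → Fin 2, η1 ≠ η2 → ν1 ≠ ν2 →
          SeqMeetEq η1 η2 ν1 ν2 → c s(α η1, α η2) = c s(α ν1, α ν2) := by
  exact key mu hmu n _ (le_of_eq (Cardinal.mk_out _).symm) c
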